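/- Define c_n for n ≥ 1 by c_{km+r} = 2^{r-1}·(2^{(k+1)m}-1)/(2^m-1) for r = 1,…,m-1 and c_{km} = 1/2 + (1/2)·(2^{(k+1)m}-1)/(2^m-1), where m ≥ 2 is fixed. Then the generating function satisfies Σ_{n≥1} c_n t^n = 1/((1-2t)(1+t+⋯+t^{m-1})) - 1 as formal power series. -/

import Mathlib

open PowerSeries

/-- Auxiliary sequence: the coefficients of `(1-X)/((1-2X)(1-X^m))`. -/
noncomputable def dseq (m : ℕ) (n : ℕ) : ℚ :=
  2 ^ (n % m) * (2 ^ ((n / m + 1) * m) - 1) / (2 ^ m - 1)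

lemma two_pow_sub_one_ne_zero {m : ℕ} (hm : 1 ≤ m) : (2 : ℚ) ^ m - 1 ≠ 0 := by
  have h1 : (1 : ℚ) < 2 ^ m := one_lt_pow₀ (by norm_num) (by omega)
  exact sub_ne_zero.mpr (ne_of_gt h1)

lemma dseq_zero {m : ℕ} (hm : 1 ≤ m) : dseq m 0 = 1 := by
  have h := two_pow_sub_one_ne_zero hm
  simp [dseq, Nat.zero_div, Nat.zero_mod, div_self h]

lemma dseq_succ {m : ℕ} (hm : 1 ≤ m) (n : ℕ) :
    dseq m (n + 1) = 2 * dseq m n + (if m ∣ (n + 1) then 1 else 0) := by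
  have hm0 : 0 < m := hm
  have hQ := two_pow_sub_one_ne_zero hm
  have hdm := Nat.div_add_mod n m
  set q := n / m with hq
  set r := n % m with hr
  have hrm : r < m := Nat.mod_lt _ hm0
  have hms : m * (q + 1) = m * q + m := Nat.mul_succ m q
  by_cases hcase : r + 1 = m
  · have hn1 : n + 1 = m * (q + 1) := by omega
    have hdvd : m ∣ (n + 1) := ⟨q + 1, hn1⟩
    have hmod : (n + 1) % m = 0 := by rw [hn1]; exact Nat.mul_mod_right _ _
    have hdiv : (n + 1) / m = q + 1 := by rw [hn1]; exact Nat.mul_div_cancel_left _ hm0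
    rw [if_pos hdvd]
    unfold dseq
    rw [hmod, hdiv, ← hq, ← hr]
    have e2 : (2 : ℚ) ^ ((q + 1 + 1) * m) = 2 ^ m * 2 ^ ((q + 1) * m) := by
      rw [show (q + 1 + 1) * m = m + (q + 1) * m by ring, pow_add]
    have e3 : (2 : ℚ) ^ m = 2 * 2 ^ r := by
      conv_lhs => rw [← hcase]
      rw [pow_succ]; ring
    rw [e2]
    rw [e3] at hQ ⊢
    field_simp
    ring
  · have hr1m : r + 1 < m := by omega
    have hn1 : n + 1 = m * q + (r + 1) := by omega
    have hmod : (n + 1) % m = r + 1 := by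
      rw [hn1, Nat.mul_add_mod, Nat.mod_eq_of_lt hr1m]
    have hdiv : (n + 1) / m = q := by
      rw [hn1, Nat.mul_add_div hm0, Nat.div_eq_of_lt hr1m, add_zero]
    have hdvd : ¬ m ∣ (n + 1) := by
      intro h
      rw [Nat.dvd_iff_mod_eq_zero] at h
      omega
    rw [if_neg hdvd]
    unfold dseq
    rw [hmod, hdiv, ← hq, ← hr, pow_succ]
    ring

theorem generating_function_example
    (m : ℕ) (hm : 2 ≤ m) (c : ℕ → ℚ)
    (hc_r : ∀ k r : ℕ, 1 ≤ r → r ≤ m - 1 →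
      c (k * m + r) = 2 ^ (r - 1) * (2 ^ ((k + 1) * m) - 1) / (2 ^ m - 1))
    (hc_0 : ∀ k : ℕ, 1 ≤ k →
      c (k * m) = 1 / 2 + (1 / 2) * (2 ^ ((k + 1) * m) - 1) / (2 ^ m - 1)) :
    PowerSeries.mk (fun n => if n = 0 then 0 else c n) =
      ((1 - 2 * (X : ℚ⟦X⟧)) * (∑ i ∈ Finset.range m, X ^ i))⁻¹ - 1 := by
  have hm1 : 1 ≤ m := by omega
  have hm0 : 0 < m := by omega
  have hQ := two_pow_sub_one_ne_zero hm1
  set A : ℚ⟦X⟧ := PowerSeries.mk (fun n => (2 : ℚ) ^ n) with hA_def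
  set B : ℚ⟦X⟧ := PowerSeries.mk (fun n => if m ∣ n then (1 : ℚ) else 0) with hB_def
  set D : ℚ⟦X⟧ := PowerSeries.mk (dseq m) with hD_def
  set S : ℚ⟦X⟧ := ∑ i ∈ Finset.range m, X ^ i with hS_def
  have h2C : (2 : ℚ⟦X⟧) = C (2 : ℚ) := (map_ofNat (C : ℚ →+* ℚ⟦X⟧) 2).symm
  -- (1 - 2X) * A = 1
  have hA : (1 - 2 * X) * A = 1 := by
    ext n
    rw [sub_mul, one_mul, h2C, mul_assoc, map_sub, coeff_C_mul]
    cases n with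
    | zero => simp [hA_def]
    | succ k =>
      rw [coeff_succ_X_mul]
      simp only [hA_def, coeff_mk, coeff_one, Nat.succ_ne_zero, if_false]
      rw [pow_succ]
      ring
  -- (1 - X^m) * B = 1
  have hB : (1 - X ^ m) * B = 1 := by
    ext n
    rw [sub_mul, one_mul, map_sub, coeff_X_pow_mul']
    simp only [hB_def, coeff_mk, coeff_one]
    by_cases hn : n = 0
    · subst hn
      rw [if_pos (dvd_zero m), if_pos rfl, if_neg (by omega : ¬ m ≤ 0)]
      norm_num
    · rw [if_neg hn]
      by_cases hmn : m ≤ n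
      · rw [if_pos hmn]
        have hiff : m ∣ n ↔ m ∣ (n - m) := by
          constructor
          · intro h; exact Nat.dvd_sub h dvd_rfl
          · intro h
            have hn' : n = (n - m) + m := by omega
            rw [hn']
            exact Nat.dvd_add h dvd_rfl
        rw [if_congr hiff rfl rfl, sub_self]
      · rw [if_neg hmn, sub_zero]
        have : ¬ m ∣ n := fun h => hmn (Nat.le_of_dvd (by omega) h)
        rw [if_neg this]
  -- (1 - 2X) * D = B
  have hD2 : (1 - 2 * X) * D = B := by
    ext n
    rw [sub_mul, one_mul, h2C, mul_assoc, map_sub, coeff_C_mul]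
    cases n with
    | zero =>
      rw [coeff_zero_X_mul]
      simp [hD_def, hB_def, dseq_zero hm1, dvd_zero]
    | succ k =>
      rw [coeff_succ_X_mul]
      simp only [hD_def, hB_def, coeff_mk]
      rw [dseq_succ hm1]
      ring
  have hAB : A * B = D := by
    calc A * B = A * ((1 - 2 * X) * D) := by rw [hD2]
    _ = ((1 - 2 * X) * A) * D := by ring
    _ = D := by rw [hA, one_mul]
  have hS1 : S * (1 - X) = 1 - X ^ m := by
    have h := geom_sum_mul (X : ℚ⟦X⟧) m
    rw [← hS_def] at h
    linear_combination -h
  set P : ℚ⟦X⟧ := (1 - X) * D with hP_def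
  have hGP : ((1 - 2 * X) * S) * P = 1 := by
    have hP2 : P = (1 - X) * (A * B) := by rw [hAB]
    rw [hP2]
    linear_combination (S * (1 - X) * B) * hA + hB + B * hS1
  have hG0 : constantCoeff ((1 - 2 * X) * S) ≠ 0 := by
    have h1 : constantCoeff ((1 - 2 * X) * S) = 1 := by
      rw [map_mul, hS_def, map_sum]
      simp [constantCoeff_X, Finset.sum_ite_eq', Finset.mem_range, hm0, zero_pow_eq]
    rw [h1]
    norm_num
  have hPinv : P = ((1 - 2 * X) * S)⁻¹ := by
    rw [PowerSeries.eq_inv_iff_mul_eq_one hG0, mul_comm]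
    exact hGP
  rw [← hPinv]
  ext n
  rw [map_sub, coeff_mk]
  cases n with
  | zero =>
    rw [if_pos rfl, hP_def, sub_mul, one_mul]
    simp only [map_sub]
    rw [coeff_zero_X_mul]
    simp [hD_def, dseq_zero hm1]
  | succ n =>
    rw [if_neg (Nat.succ_ne_zero n), hP_def, sub_mul, one_mul]
    simp only [map_sub]
    rw [coeff_succ_X_mul]
    simp only [hD_def, coeff_mk, coeff_one, Nat.succ_ne_zero, if_false, sub_zero]
    -- goal : c (n+1) = dseq m (n+1) - dseq m n
    obtain ⟨k, r, hrm, hdm⟩ : ∃ k r, r < m ∧ m * k + r = n + 1 :=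
      ⟨(n + 1) / m, (n + 1) % m, Nat.mod_lt _ hm0, Nat.div_add_mod _ _⟩
    have hmod1 : (n + 1) % m = r := by
      rw [← hdm, Nat.mul_add_mod, Nat.mod_eq_of_lt hrm]
    have hdiv1 : (n + 1) / m = k := by
      rw [← hdm, Nat.mul_add_div hm0, Nat.div_eq_of_lt hrm, add_zero]
    by_cases hr0 : r = 0
    · subst hr0
      cases k with
      | zero => omega
      | succ k' =>
        have hms : m * (k' + 1) = m * k' + m := Nat.mul_succ m k'
        have hneq : n = m * k' + (m - 1) := by omega
        have hnmod : n % m = m - 1 := by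
          rw [hneq, Nat.mul_add_mod, Nat.mod_eq_of_lt (by omega)]
        have hndiv : n / m = k' := by
          rw [hneq, Nat.mul_add_div hm0, Nat.div_eq_of_lt (by omega), add_zero]
        have hc' : c (n + 1) =
            1 / 2 + 1 / 2 * (2 ^ ((k' + 1 + 1) * m) - 1) / (2 ^ m - 1) := by
          have he : (k' + 1) * m = m * k' + m := by ring
          rw [show n + 1 = (k' + 1) * m by omega]
          exact hc_0 (k' + 1) (by omega)
        rw [hc']
        unfold dseq
        rw [hmod1, hdiv1, hnmod, hndiv]
        set b : ℚ := 2 ^ (m - 1) with hb_def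
        have hb : (2 : ℚ) ^ m = 2 * b := by
          conv_lhs => rw [show m = (m - 1) + 1 by omega]
          rw [pow_succ]; ring
        have ha : (2 : ℚ) ^ ((k' + 1 + 1) * m) = (2 * b) * 2 ^ ((k' + 1) * m) := by
          rw [show (k' + 1 + 1) * m = m + (k' + 1) * m by ring, pow_add, hb]
        rw [hb] at hQ
        rw [ha, hb]
        field_simp
        ring
    · have hneq : n = m * k + (r - 1) := by omega
      have hnmod : n % m = r - 1 := by
        rw [hneq, Nat.mul_add_mod, Nat.mod_eq_of_lt (by omega)]
      have hndiv : n / m = k := by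
        rw [hneq, Nat.mul_add_div hm0, Nat.div_eq_of_lt (by omega), add_zero]
      have hc' : c (n + 1) = 2 ^ (r - 1) * (2 ^ ((k + 1) * m) - 1) / (2 ^ m - 1) := by
        have he : k * m = m * k := mul_comm k m
        rw [show n + 1 = k * m + r by omega]
        exact hc_r k r (by omega) (by omega)
      rw [hc']
      unfold dseq
      rw [hmod1, hdiv1, hnmod, hndiv]
      have h2r : (2 : ℚ) ^ r = 2 * 2 ^ (r - 1) := by
        conv_lhs => rw [show r = (r - 1) + 1 by omega]
        rw [pow_succ]; ring
      rw [h2r]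
      field_simp
      ring
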